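/- Let (X, d) be a metric space and let Θ, Υ : X → L²(μ) be maps whose values are almost-everywhere-nonnegative functions of unit norm, with Θ K₁-Lipschitz and Υ K₂-Lipschitz. Define the straight-line homotopy H : X × [0,1] → L²(μ) by H(x, t) = (1−t)·Θ(x) + t·Υ(x). Then for all x, y ∈ X and s, t ∈ [0,1], ‖H(x, t) − H(y, s)‖ ≤ (K₁² + K₂²)^{1/2} · d(x, y) + √2 · |t − s|. (This combines the two estimates of Section 6: each time-slice H^t of the straight-line homotopy stretches by at most (K₁² + K₂²)^{1/2}, and H stretches by at most √2 in the time direction; it yields the Lipschitz bound on H used in the proof of Proposition 7.2.) -/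

import Mathlib

open MeasureTheory

/-- Lipschitz estimate for the straight-line homotopy between two Lipschitz maps into the
a.e.-nonnegative unit vectors of `L²(μ)`. -/
theorem straight_line_homotopy_lipschitz_estimate
    {Ω : Type*} [MeasurableSpace Ω] {μ : Measure Ω}
    {X : Type*} [MetricSpace X]
    (Θ Υ : X → Lp ℝ 2 μ) (K₁ K₂ : NNReal)
    (hΘ : LipschitzWith K₁ Θ) (hΥ : LipschitzWith K₂ Υ)
    (hΘpos : ∀ x, 0 ≤ᵐ[μ] (Θ x : Ω → ℝ)) (hΥpos : ∀ x, 0 ≤ᵐ[μ] (Υ x : Ω → ℝ))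
    (hΘn : ∀ x, ‖Θ x‖ = 1) (hΥn : ∀ x, ‖Υ x‖ = 1)
    (x y : X) (s t : ℝ) (hs : s ∈ Set.Icc (0 : ℝ) 1) (ht : t ∈ Set.Icc (0 : ℝ) 1) :
    ‖((1 - t) • Θ x + t • Υ x) - ((1 - s) • Θ y + s • Υ y)‖ ≤
      Real.sqrt ((K₁ : ℝ) ^ 2 + (K₂ : ℝ) ^ 2) * dist x y + Real.sqrt 2 * |t - s| := by
  obtain ⟨hs0, hs1⟩ := hs
  obtain ⟨ht0, ht1⟩ := ht
  have key : ((1 - t) • Θ x + t • Υ x) - ((1 - s) • Θ y + s • Υ y)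
      = ((1 - t) • (Θ x - Θ y) + t • (Υ x - Υ y)) + (t - s) • (Υ y - Θ y) := by
    module
  rw [key]
  have hA : ‖(1 - t) • (Θ x - Θ y) + t • (Υ x - Υ y)‖ ≤
      Real.sqrt ((K₁ : ℝ) ^ 2 + (K₂ : ℝ) ^ 2) * dist x y := by
    have h1 : ‖Θ x - Θ y‖ ≤ (K₁ : ℝ) * dist x y := by
      rw [← dist_eq_norm]; exact hΘ.dist_le_mul x y
    have h2 : ‖Υ x - Υ y‖ ≤ (K₂ : ℝ) * dist x y := by
      rw [← dist_eq_norm]; exact hΥ.dist_le_mul x y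
    have hK1 : (K₁ : ℝ) ≤ Real.sqrt ((K₁ : ℝ) ^ 2 + (K₂ : ℝ) ^ 2) := by
      rw [Real.le_sqrt K₁.coe_nonneg (by positivity)]
      exact le_add_of_nonneg_right (sq_nonneg _)
    have hK2 : (K₂ : ℝ) ≤ Real.sqrt ((K₁ : ℝ) ^ 2 + (K₂ : ℝ) ^ 2) := by
      rw [Real.le_sqrt K₂.coe_nonneg (by positivity)]
      exact le_add_of_nonneg_left (sq_nonneg _)
    have hd : (0:ℝ) ≤ dist x y := dist_nonneg
    calc ‖(1 - t) • (Θ x - Θ y) + t • (Υ x - Υ y)‖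
        ≤ ‖(1 - t) • (Θ x - Θ y)‖ + ‖t • (Υ x - Υ y)‖ := norm_add_le _ _
      _ = (1 - t) * ‖Θ x - Θ y‖ + t * ‖Υ x - Υ y‖ := by
          rw [norm_smul, norm_smul, Real.norm_eq_abs, Real.norm_eq_abs,
            abs_of_nonneg (by linarith), abs_of_nonneg ht0]
      _ ≤ (1 - t) * ((K₁ : ℝ) * dist x y) + t * ((K₂ : ℝ) * dist x y) :=
          add_le_add (mul_le_mul_of_nonneg_left h1 (by linarith))
            (mul_le_mul_of_nonneg_left h2 ht0)
      _ ≤ (1 - t) * (Real.sqrt ((K₁ : ℝ) ^ 2 + (K₂ : ℝ) ^ 2) * dist x y)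
          + t * (Real.sqrt ((K₁ : ℝ) ^ 2 + (K₂ : ℝ) ^ 2) * dist x y) :=
          add_le_add
            (mul_le_mul_of_nonneg_left (mul_le_mul_of_nonneg_right hK1 hd) (by linarith))
            (mul_le_mul_of_nonneg_left (mul_le_mul_of_nonneg_right hK2 hd) ht0)
      _ = Real.sqrt ((K₁ : ℝ) ^ 2 + (K₂ : ℝ) ^ 2) * dist x y := by ring
  have hB : ‖(t - s) • (Υ y - Θ y)‖ ≤ Real.sqrt 2 * |t - s| := by
    have hinner : (0:ℝ) ≤ inner (𝕜 := ℝ) (Υ y) (Θ y) := by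
      rw [MeasureTheory.L2.inner_def]
      refine integral_nonneg_of_ae ?_
      filter_upwards [hΘpos y, hΥpos y] with a h1 h2
      simpa using mul_nonneg h1 h2
    have hsq : ‖Υ y - Θ y‖ ^ 2 ≤ 2 := by
      have := norm_sub_sq_real (Υ y) (Θ y)
      rw [hΥn y, hΘn y] at this
      nlinarith
    have hnorm : ‖Υ y - Θ y‖ ≤ Real.sqrt 2 := by
      rw [Real.le_sqrt (norm_nonneg _) (by norm_num)]
      exact hsq
    rw [norm_smul, Real.norm_eq_abs]
    calc |t - s| * ‖Υ y - Θ y‖ ≤ |t - s| * Real.sqrt 2 :=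
          mul_le_mul_of_nonneg_left hnorm (abs_nonneg _)
      _ = Real.sqrt 2 * |t - s| := mul_comm _ _
  exact (norm_add_le _ _).trans (add_le_add hA hB)
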